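/- Let p and q be distributions over [n] and let 𝒟 be a partition of [n] into finitely many disjoint nonempty subsets. Then ‖p − q‖₁ ≤ ∑_{D∈𝒟} |p(D) − q(D)| + ∑_{D∈𝒟} ‖p_{|D} − q_{|D}‖₁ · min(p(D), q(D)), where for each D with p(D) > 0 and q(D) > 0, ‖p_{|D} − q_{|D}‖₁ = ∑_{x∈D} |p(x)/p(D) − q(x)/q(D)|, and by convention ‖p_{|D} − q_{|D}‖₁ = 0 whenever p(D) = 0 or q(D) = 0. -/

import Mathlib

open Finset
open scoped Classical

/-- A distribution over `[n]`: nonnegative values summing to 1. -/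
def IsDist {n : ℕ} (p : Fin n → ℝ) : Prop :=
  (∀ i, 0 ≤ p i) ∧ ∑ i, p i = 1

lemma perD_half {n : ℕ} (p q : Fin n → ℝ) (D : Finset (Fin n))
    (hq : ∀ x ∈ D, 0 ≤ q x)
    (hP : 0 < ∑ x ∈ D, p x) (hQ : 0 < ∑ x ∈ D, q x)
    (hPQ : (∑ x ∈ D, p x) ≤ ∑ x ∈ D, q x) :
    ∑ x ∈ D, |p x - q x| ≤
      ((∑ x ∈ D, q x) - ∑ x ∈ D, p x) +
        (∑ x ∈ D, |p x / (∑ y ∈ D, p y) - q x / (∑ y ∈ D, q y)|) * (∑ x ∈ D, p x) := by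
  set P := ∑ x ∈ D, p x with hPdef
  set Q := ∑ x ∈ D, q x with hQdef
  have key : ∀ x ∈ D, |p x - q x| ≤ P * |p x / P - q x / Q| + q x * (1 - P / Q) := by
    intro x hx
    have hid : p x - q x = P * (p x / P - q x / Q) + q x * (P / Q - 1) := by
      field_simp
      ring
    calc |p x - q x| = |P * (p x / P - q x / Q) + q x * (P / Q - 1)| := by rw [hid]
      _ ≤ |P * (p x / P - q x / Q)| + |q x * (P / Q - 1)| := abs_add_le _ _
      _ = P * |p x / P - q x / Q| + q x * (1 - P / Q) := by
          have h1 : |P / Q - 1| = 1 - P / Q := by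
            rw [abs_of_nonpos (by
              have : P / Q ≤ 1 := (div_le_one hQ).2 hPQ
              linarith)]
            ring
          rw [abs_mul, abs_mul, abs_of_pos hP, abs_of_nonneg (hq x hx), h1]
  calc ∑ x ∈ D, |p x - q x| ≤ ∑ x ∈ D, (P * |p x / P - q x / Q| + q x * (1 - P / Q)) :=
        Finset.sum_le_sum key
    _ = P * ∑ x ∈ D, |p x / P - q x / Q| + Q * (1 - P / Q) := by
        rw [Finset.sum_add_distrib, ← Finset.mul_sum, ← Finset.sum_mul]
    _ = (Q - P) + (∑ x ∈ D, |p x / P - q x / Q|) * P := by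
        rw [mul_sub, mul_one, mul_div_assoc', mul_div_cancel_left₀ P hQ.ne']
        ring

lemma perD {n : ℕ} (p q : Fin n → ℝ) (D : Finset (Fin n))
    (hp : ∀ x ∈ D, 0 ≤ p x) (hq : ∀ x ∈ D, 0 ≤ q x) :
    ∑ x ∈ D, |p x - q x| ≤
      |(∑ x ∈ D, p x) - ∑ x ∈ D, q x| +
        (if (∑ x ∈ D, p x) = 0 ∨ (∑ x ∈ D, q x) = 0 then 0
          else ∑ x ∈ D, |p x / (∑ y ∈ D, p y) - q x / (∑ y ∈ D, q y)|) *
          min (∑ x ∈ D, p x) (∑ x ∈ D, q x) := by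
  set P := ∑ x ∈ D, p x with hPdef
  set Q := ∑ x ∈ D, q x with hQdef
  have hP0 : 0 ≤ P := Finset.sum_nonneg hp
  have hQ0 : 0 ≤ Q := Finset.sum_nonneg hq
  by_cases hP : P = 0
  · have hpz : ∀ x ∈ D, p x = 0 := by
      intro x hx
      exact (Finset.sum_eq_zero_iff_of_nonneg hp).1 hP x hx
    rw [if_pos (Or.inl hP), zero_mul, add_zero]
    have : ∑ x ∈ D, |p x - q x| = ∑ x ∈ D, q x := by
      apply Finset.sum_congr rfl
      intro x hx
      rw [hpz x hx, zero_sub, abs_neg, abs_of_nonneg (hq x hx)]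
    rw [this, hP, zero_sub, abs_neg, abs_of_nonneg hQ0]
  · by_cases hQ : Q = 0
    · have hqz : ∀ x ∈ D, q x = 0 := by
        intro x hx
        exact (Finset.sum_eq_zero_iff_of_nonneg hq).1 hQ x hx
      rw [if_pos (Or.inr hQ), zero_mul, add_zero]
      have : ∑ x ∈ D, |p x - q x| = ∑ x ∈ D, p x := by
        apply Finset.sum_congr rfl
        intro x hx
        rw [hqz x hx, sub_zero, abs_of_nonneg (hp x hx)]
      rw [this, hQ, sub_zero, abs_of_nonneg hP0]
    · have hPpos : 0 < P := lt_of_le_of_ne hP0 (Ne.symm hP)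
      have hQpos : 0 < Q := lt_of_le_of_ne hQ0 (Ne.symm hQ)
      rw [if_neg (by push_neg; exact ⟨hP, hQ⟩)]
      rcases le_total P Q with h | h
      · have := perD_half p q D hq hPpos hQpos h
        rw [abs_of_nonpos (by linarith), min_eq_left h]
        linarith
      · have := perD_half q p D hp hQpos hPpos h
        rw [abs_of_nonneg (by linarith), min_eq_right h]
        have heq : (∑ x ∈ D, |q x / (∑ y ∈ D, q y) - p x / (∑ y ∈ D, p y)|)
            = ∑ x ∈ D, |p x / (∑ y ∈ D, p y) - q x / (∑ y ∈ D, q y)| := by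
          apply Finset.sum_congr rfl
          intro x _
          rw [abs_sub_comm]
        have h2 : ∑ x ∈ D, |q x - p x| = ∑ x ∈ D, |p x - q x| := by
          apply Finset.sum_congr rfl
          intro x _
          rw [abs_sub_comm]
        rw [h2, heq] at this
        linarith

/-- For a partition `𝒟` of `[n]`,
`‖p − q‖₁ ≤ ∑_{D∈𝒟} |p(D) − q(D)| + ∑_{D∈𝒟} ‖p_{|D} − q_{|D}‖₁·min(p(D), q(D))`,
with the convention that `‖p_{|D} − q_{|D}‖₁ = 0` when `p(D) = 0` or `q(D) = 0`. -/
theorem stmt13 {n : ℕ} (p q : Fin n → ℝ) (hp : IsDist p) (hq : IsDist q)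
    (𝒟 : Finset (Finset (Fin n)))
    (hne : ∀ D ∈ 𝒟, D.Nonempty)
    (hdisj : (𝒟 : Set (Finset (Fin n))).PairwiseDisjoint id)
    (hcover : ∀ i : Fin n, ∃ D ∈ 𝒟, i ∈ D) :
    ∑ i, |p i - q i| ≤
      (∑ D ∈ 𝒟, |(∑ x ∈ D, p x) - ∑ x ∈ D, q x|) +
        ∑ D ∈ 𝒟,
          (if (∑ x ∈ D, p x) = 0 ∨ (∑ x ∈ D, q x) = 0 then 0
            else ∑ x ∈ D, |p x / (∑ y ∈ D, p y) - q x / (∑ y ∈ D, q y)|) *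
            min (∑ x ∈ D, p x) (∑ x ∈ D, q x) := by
  have huniv : (Finset.univ : Finset (Fin n)) = 𝒟.biUnion id := by
    ext i
    simp only [Finset.mem_univ, Finset.mem_biUnion, id, true_iff]
    exact hcover i
  have hsplit : ∑ i, |p i - q i| = ∑ D ∈ 𝒟, ∑ x ∈ D, |p x - q x| := by
    rw [huniv, Finset.sum_biUnion hdisj]
    simp only [id]
  rw [hsplit, ← Finset.sum_add_distrib]
  exact Finset.sum_le_sum fun D _ => perD p q D (fun x _ => hp.1 x) (fun x _ => hq.1 x)
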